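/- Under the assumptions that the data distribution has compact support K, and that there exists κ₂ > 0 such that for all x ∈ K and all D ∈ C the matrix D_Λᵀ D_Λ (for Λ the active inequality set of the Lasso optimality conditions) has smallest eigenvalue ≥ κ₂, the map (x, D) ↦ α★(x, D) giving the unique Lasso solution is uniformly Lipschitz on K × C. -/

import Mathlib

open Finset

namespace LassoAux

noncomputable def nr {n : ℕ} (v : Fin n → ℝ) : ℝ := Real.sqrt (∑ i, v i ^ 2)

noncomputable def nrF {m k : ℕ} (D : Matrix (Fin m) (Fin k) ℝ) : ℝ :=
  Real.sqrt (∑ i, ∑ j, (D i j) ^ 2)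

lemma nr_nonneg {n : ℕ} (v : Fin n → ℝ) : 0 ≤ nr v := Real.sqrt_nonneg _

lemma nrF_nonneg {m k : ℕ} (D : Matrix (Fin m) (Fin k) ℝ) : 0 ≤ nrF D := Real.sqrt_nonneg _

lemma sq_nr {n : ℕ} (v : Fin n → ℝ) : nr v ^ 2 = ∑ i, v i ^ 2 :=
  Real.sq_sqrt (by positivity)

lemma nr_sq_le {n : ℕ} (v : Fin n → ℝ) {c : ℝ} (hc : 0 ≤ c) (h : ∑ i, v i ^ 2 ≤ c ^ 2) :
    nr v ≤ c := by
  rw [nr]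
  calc Real.sqrt (∑ i, v i ^ 2) ≤ Real.sqrt (c ^ 2) := Real.sqrt_le_sqrt h
  _ = c := by rw [Real.sqrt_sq hc]

lemma abs_le_nr {n : ℕ} (v : Fin n → ℝ) (i : Fin n) : |v i| ≤ nr v := by
  rw [nr, ← Real.sqrt_sq_eq_abs (v i)]
  exact Real.sqrt_le_sqrt (Finset.single_le_sum (f := fun i => v i ^ 2)
    (fun i _ => sq_nonneg _) (mem_univ i))

lemma abs_le_nrF {m k : ℕ} (D : Matrix (Fin m) (Fin k) ℝ) (i : Fin m) (j : Fin k) :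
    |D i j| ≤ nrF D := by
  rw [nrF, ← Real.sqrt_sq_eq_abs (D i j)]
  refine Real.sqrt_le_sqrt ?_
  calc (D i j)^2 ≤ ∑ j', (D i j')^2 :=
        Finset.single_le_sum (f := fun j' => (D i j')^2) (fun _ _ => sq_nonneg _) (mem_univ j)
  _ ≤ ∑ i', ∑ j', (D i' j')^2 :=
        Finset.single_le_sum (f := fun i' => ∑ j', (D i' j')^2)
          (fun _ _ => Finset.sum_nonneg fun _ _ => sq_nonneg _) (mem_univ i)

lemma cs {n : ℕ} (v w : Fin n → ℝ) : |∑ i, v i * w i| ≤ nr v * nr w := by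
  rw [← Real.sqrt_sq_eq_abs, nr, nr, ← Real.sqrt_mul (by positivity)]
  exact Real.sqrt_le_sqrt (sum_mul_sq_le_sq_mul_sq univ v w)

lemma nr_add_le {n : ℕ} (v w : Fin n → ℝ) : nr (v + w) ≤ nr v + nr w := by
  have h1 : ∑ i, (v + w) i ^ 2 ≤ (nr v + nr w) ^ 2 := by
    have hc := abs_le.mp (cs v w)
    calc ∑ i, (v + w) i ^ 2
        = ∑ i, (v i ^ 2 + w i ^ 2 + 2 * (v i * w i)) :=
          Finset.sum_congr rfl fun i _ => by simp only [Pi.add_apply]; ring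
      _ = ∑ i, v i ^ 2 + ∑ i, w i ^ 2 + 2 * ∑ i, v i * w i := by
          rw [sum_add_distrib, sum_add_distrib, mul_sum]
      _ ≤ (nr v + nr w) ^ 2 := by
          have e1 := sq_nr v; have e2 := sq_nr w; nlinarith [hc.1, hc.2]
  exact nr_sq_le _ (add_nonneg (nr_nonneg v) (nr_nonneg w)) h1

lemma nr_neg {n : ℕ} (v : Fin n → ℝ) : nr (-v) = nr v := by
  simp [nr]

lemma nr_congr {n : ℕ} (v w : Fin n → ℝ) (h : ∀ i, v i = w i) : nr v = nr w := by
  rw [nr, nr]; exact congrArg _ (Finset.sum_congr rfl fun i _ => by rw [h i])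

lemma nr_sub_le {n : ℕ} (v w : Fin n → ℝ) : nr (v - w) ≤ nr v + nr w := by
  have := nr_add_le v (-w)
  rw [nr_neg] at this
  simpa [sub_eq_add_neg] using this

lemma nr_mulVec_le {m k : ℕ} (D : Matrix (Fin m) (Fin k) ℝ) (v : Fin k → ℝ) :
    nr (D.mulVec v) ≤ nrF D * nr v := by
  refine nr_sq_le _ (mul_nonneg (nrF_nonneg D) (nr_nonneg v)) ?_
  have h1 : ∀ i, (D.mulVec v i) ^ 2 ≤ (∑ j, D i j ^ 2) * ∑ j, v j ^ 2 := fun i =>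
    sum_mul_sq_le_sq_mul_sq univ (fun j => D i j) v
  calc ∑ i, (D.mulVec v i) ^ 2 ≤ ∑ i, (∑ j, D i j ^ 2) * ∑ j, v j ^ 2 :=
        Finset.sum_le_sum fun i _ => h1 i
  _ = (∑ i, ∑ j, D i j ^ 2) * ∑ j, v j ^ 2 := by rw [sum_mul]
  _ = (nrF D * nr v) ^ 2 := by rw [mul_pow, sq_nr, nrF, Real.sq_sqrt (by positivity)]

lemma nr_le_sum_abs {n : ℕ} (v : Fin n → ℝ) : nr v ≤ ∑ i, |v i| := by
  refine nr_sq_le _ (Finset.sum_nonneg fun i _ => abs_nonneg _) ?_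
  calc ∑ i, v i ^ 2 = ∑ i, |v i| * |v i| := by
        refine Finset.sum_congr rfl fun i _ => by
          rw [← abs_mul, abs_of_nonneg (by nlinarith [sq_nonneg (v i)] : (0:ℝ) ≤ v i * v i)]
          ring
  _ ≤ ∑ i, |v i| * (∑ l, |v l|) := Finset.sum_le_sum fun i _ =>
        mul_le_mul_of_nonneg_left
          (Finset.single_le_sum (f := fun l => |v l|) (fun l _ => abs_nonneg _) (mem_univ i))
          (abs_nonneg _)
  _ = (∑ i, |v i|) ^ 2 := by rw [← sum_mul]; ring

lemma nrF_sub_comm {m k : ℕ} (D D' : Matrix (Fin m) (Fin k) ℝ) :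
    nrF (D - D') = nrF (D' - D) := by
  rw [nrF, nrF]
  refine congrArg _ (Finset.sum_congr rfl fun i _ => Finset.sum_congr rfl fun j _ => ?_)
  have : (D - D') i j = -((D' - D) i j) := by simp [Matrix.sub_apply]
  rw [this]; ring

noncomputable def f {m k : ℕ} (lam : ℝ) (x : Fin m → ℝ)
    (D : Matrix (Fin m) (Fin k) ℝ) (a : Fin k → ℝ) : ℝ :=
  (1/2) * (∑ i, (x i - D.mulVec a i)^2) + lam * ∑ j, |a j|

noncomputable def corr {m k : ℕ} (x : Fin m → ℝ) (D : Matrix (Fin m) (Fin k) ℝ)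
    (a : Fin k → ℝ) (j : Fin k) : ℝ :=
  ∑ i, D i j * (x i - D.mulVec a i)

lemma key {m k : ℕ} {lam : ℝ} {x : Fin m → ℝ} {D : Matrix (Fin m) (Fin k) ℝ}
    {a : Fin k → ℝ} (hmin : ∀ β, f lam x D a ≤ f lam x D β) (j : Fin k) (t : ℝ) :
    0 ≤ - t * corr x D a j + t^2 / 2 * (∑ i, (D i j)^2) + lam * (|a j + t| - |a j|) := by
  set β : Fin k → ℝ := fun l => a l + if l = j then t else 0 with hβ
  have h := hmin β
  have hmv : ∀ i, D.mulVec β i = D.mulVec a i + t * D i j := by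
    intro i
    simp only [Matrix.mulVec, dotProduct, hβ]
    rw [Finset.sum_congr rfl (fun l _ => mul_add (D i l) (a l) _)]
    rw [sum_add_distrib]
    congr 1
    rw [Finset.sum_congr rfl (fun l _ => by rw [mul_ite, mul_zero])]
    rw [Finset.sum_ite_eq' univ j (fun l => D i l * t)]
    simp [mul_comm]
  have habs : ∑ l, |β l| = (∑ l, |a l|) - |a j| + |a j + t| := by
    have hterm : ∀ l, |β l| = |a l| + (if l = j then |a j + t| - |a j| else 0) := by
      intro l; by_cases hl : l = j
      · subst hl; simp [hβ]
      · simp [hβ, hl]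
    rw [Finset.sum_congr rfl fun l _ => hterm l, sum_add_distrib,
      Finset.sum_ite_eq' univ j (fun _ => |a j + t| - |a j|)]
    simp; ring
  have hquad : ∑ i, (x i - D.mulVec β i)^2
      = ∑ i, (x i - D.mulVec a i)^2 - 2 * t * corr x D a j + t^2 * ∑ i, (D i j)^2 := by
    calc ∑ i, (x i - D.mulVec β i)^2
        = ∑ i, ((x i - D.mulVec a i)^2 - 2 * t * (D i j * (x i - D.mulVec a i))
            + t^2 * (D i j)^2) := Finset.sum_congr rfl fun i _ => by rw [hmv i]; ring
      _ = _ := by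
          rw [sum_add_distrib, sum_sub_distrib, ← mul_sum, ← mul_sum, corr]
  rw [f, f, hquad, habs] at h
  nlinarith [h]

lemma foc_le {m k : ℕ} {lam : ℝ} (hlam : 0 < lam) {x : Fin m → ℝ}
    {D : Matrix (Fin m) (Fin k) ℝ} {a : Fin k → ℝ}
    (hmin : ∀ β, f lam x D a ≤ f lam x D β) (j : Fin k) :
    |corr x D a j| ≤ lam := by
  set c := corr x D a j with hc
  set s := ∑ i, (D i j)^2 with hs
  have hs0 : 0 ≤ s := Finset.sum_nonneg fun i _ => sq_nonneg _
  have hkey : ∀ t : ℝ, 0 ≤ - t * c + t^2/2 * s + lam * |t| := by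
    intro t
    have h := key hmin j t
    have habs : |a j + t| - |a j| ≤ |t| := by
      have h2 := abs_sub_abs_le_abs_sub (a j + t) (a j)
      simp at h2
      linarith
    nlinarith [h, mul_le_mul_of_nonneg_left habs hlam.le]
  rw [abs_le]
  constructor
  · by_contra hgt
    push_neg at hgt
    set d := -(c + lam) with hd
    have hd0 : 0 < d := by simp [hd]; linarith
    set t : ℝ := -(d / (s + 1)) with ht
    have htpos : 0 < d / (s + 1) := div_pos hd0 (by linarith)
    have h2 : (d / (s + 1)) * (s + 1) = d := by field_simp
    have hk := hkey t
    rw [ht, abs_neg, abs_of_pos htpos] at hk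
    nlinarith [hk, h2, mul_pos htpos htpos, mul_nonneg (mul_pos htpos htpos).le hs0,
      mul_le_mul_of_nonneg_left h2.le htpos.le]
  · by_contra hgt
    push_neg at hgt
    set d := c - lam with hd
    have hd0 : 0 < d := by simp [hd]; linarith
    set t : ℝ := d / (s + 1) with ht
    have htpos : 0 < t := div_pos hd0 (by linarith)
    have h2 : t * (s + 1) = d := by rw [ht]; field_simp
    have hk := hkey t
    rw [abs_of_pos htpos] at hk
    nlinarith [hk, h2, mul_pos htpos htpos, mul_nonneg (mul_pos htpos htpos).le hs0,
      mul_le_mul_of_nonneg_left h2.le htpos.le]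

lemma foc_eq {m k : ℕ} {lam : ℝ} (hlam : 0 < lam) {x : Fin m → ℝ}
    {D : Matrix (Fin m) (Fin k) ℝ} {a : Fin k → ℝ}
    (hmin : ∀ β, f lam x D a ≤ f lam x D β) (j : Fin k) (hne : a j ≠ 0) :
    |corr x D a j| = lam := by
  set c := corr x D a j with hc
  set s := ∑ i, (D i j)^2 with hs
  have hs0 : 0 ≤ s := Finset.sum_nonneg fun i _ => sq_nonneg _
  have hle := foc_le hlam hmin j
  rw [abs_le] at hle
  rcases lt_or_gt_of_ne hne with hneg | hpos
  · have hcle : c ≤ -lam := by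
      by_contra hgt
      push_neg at hgt
      set d := c + lam with hd
      have hd0 : 0 < d := by linarith
      set t : ℝ := min (d / (s + 1)) (-(a j) / 2) with ht
      have htpos : 0 < t := lt_min (div_pos hd0 (by linarith)) (by linarith)
      have ht1 : t * (s + 1) ≤ d := by
        have h3 := min_le_left (d / (s + 1)) (-(a j) / 2)
        calc t * (s+1) ≤ (d / (s+1)) * (s+1) :=
              mul_le_mul_of_nonneg_right h3 (by linarith)
        _ = d := by field_simp
      have ht2 : a j + t < 0 := by
        have h4 : t ≤ -(a j) / 2 := min_le_right _ _
        linarith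
      have hk := key hmin j t
      rw [abs_of_neg ht2, abs_of_neg hneg] at hk
      nlinarith [hk, mul_le_mul_of_nonneg_left ht1 htpos.le, mul_pos htpos htpos,
        mul_nonneg (mul_pos htpos htpos).le hs0]
    have hceq : c = -lam := le_antisymm hcle (by linarith [hle.1])
    rw [hc] at hceq ⊢
    rw [hceq, abs_neg, abs_of_pos hlam]
  · have hcge : lam ≤ c := by
      by_contra hgt
      push_neg at hgt
      set d := lam - c with hd
      have hd0 : 0 < d := by linarith
      set tp : ℝ := min (d / (s + 1)) (a j / 2) with ht
      have htpos : 0 < tp := lt_min (div_pos hd0 (by linarith)) (by linarith)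
      have ht1 : tp * (s + 1) ≤ d := by
        have h3 := min_le_left (d / (s + 1)) (a j / 2)
        calc tp * (s+1) ≤ (d / (s+1)) * (s+1) :=
              mul_le_mul_of_nonneg_right h3 (by linarith)
        _ = d := by field_simp
      have ht2 : 0 < a j + -tp := by
        have h4 : tp ≤ a j / 2 := min_le_right _ _
        linarith
      have hk := key hmin j (-tp)
      rw [abs_of_pos ht2, abs_of_pos hpos] at hk
      nlinarith [hk, mul_le_mul_of_nonneg_left ht1 htpos.le, mul_pos htpos htpos,
        mul_nonneg (mul_pos htpos htpos).le hs0]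
    have hceq : c = lam := le_antisymm hle.2 hcge
    rw [hc] at hceq ⊢
    rw [hceq, abs_of_pos hlam]

lemma sconv {m k : ℕ} {lam : ℝ} (hlam : 0 < lam) {x : Fin m → ℝ}
    {D : Matrix (Fin m) (Fin k) ℝ} {a : Fin k → ℝ}
    (hmin : ∀ β, f lam x D a ≤ f lam x D β) (b : Fin k → ℝ) :
    f lam x D a + (1/4) * ∑ i, (D.mulVec (b - a) i)^2 ≤ f lam x D b := by
  set g : Fin k → ℝ := fun j => (a j + b j) / 2 with hg
  have h := hmin g
  have hmv : ∀ i, D.mulVec g i = (D.mulVec a i + D.mulVec b i) / 2 := by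
    intro i
    simp only [Matrix.mulVec, dotProduct, hg]
    rw [Finset.sum_congr rfl (fun l _ => show D i l * ((a l + b l)/2)
      = D i l * a l / 2 + D i l * b l / 2 by ring), sum_add_distrib, ← sum_div, ← sum_div]
    ring
  have hmvu : ∀ i, D.mulVec (b - a) i = D.mulVec b i - D.mulVec a i := by
    intro i
    simp only [Matrix.mulVec, dotProduct, Pi.sub_apply, mul_sub]
    rw [sum_sub_distrib]
  have hquad : ∑ i, (x i - D.mulVec g i)^2
      = (1/2) * ∑ i, (x i - D.mulVec a i)^2 + (1/2) * ∑ i, (x i - D.mulVec b i)^2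
        - (1/4) * ∑ i, (D.mulVec (b - a) i)^2 := by
    rw [mul_sum, mul_sum, mul_sum, ← sum_add_distrib, ← sum_sub_distrib]
    refine Finset.sum_congr rfl fun i _ => ?_
    rw [hmv i, hmvu i]; ring
  have habs : ∑ j, |g j| ≤ (1/2) * ∑ j, |a j| + (1/2) * ∑ j, |b j| := by
    rw [mul_sum, mul_sum, ← sum_add_distrib]
    refine Finset.sum_le_sum fun j _ => ?_
    rw [hg]
    calc |(a j + b j)/2| ≤ (|a j| + |b j|)/2 := by
          rw [abs_div, abs_two]; linarith [abs_add_le (a j) (b j)]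
    _ = 1/2 * |a j| + 1/2 * |b j| := by ring
  simp only [f] at h ⊢
  rw [hquad] at h
  nlinarith [h, mul_le_mul_of_nonneg_left habs hlam.le]

set_option maxHeartbeats 1000000 in
lemma quant {m k : ℕ} {lam : ℝ} (hlam : 0 < lam) {x x' : Fin m → ℝ}
    {D D' : Matrix (Fin m) (Fin k) ℝ} {a a' : Fin k → ℝ} (R B SK : ℝ)
    (hmin1 : ∀ β, f lam x D a ≤ f lam x D β) (hmin2 : ∀ β, f lam x' D' a' ≤ f lam x' D' β)
    (hR0 : 0 ≤ R) (hB0 : 0 ≤ B) (hSK0 : 0 ≤ SK)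
    (hx : nr x ≤ R) (hx' : nr x' ≤ R) (ha : nr a ≤ B) (ha' : nr a' ≤ B)
    (hD : nrF D ≤ SK) (hD' : nrF D' ≤ SK) :
    (1/4) * ∑ i, (D.mulVec (a - a') i)^2 ≤
      (R + 2*SK*B + SK) * (nr (x - x') + nrF (D - D')) * nr (a - a') := by
  set u : Fin k → ℝ := a - a' with hu
  set P := D.mulVec a with hP
  set P' := D.mulVec a' with hP'
  set Q := D'.mulVec a with hQ
  set Q' := D'.mulVec a' with hQ'
  set w : Fin m → ℝ := fun i => 2 * x i - P i - P' i with hw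
  set w' : Fin m → ℝ := fun i => 2 * x' i - Q i - Q' i with hw'
  have hDu : ∀ i, D.mulVec u i = P i - P' i := by
    intro i; rw [hu, Matrix.mulVec_sub]; rfl
  have hD'u : ∀ i, D'.mulVec u i = Q i - Q' i := by
    intro i; rw [hu, Matrix.mulVec_sub]; rfl
  have hEu : ∀ i, (D - D').mulVec u i = D.mulVec u i - D'.mulVec u i := by
    intro i; rw [Matrix.sub_mulVec]; rfl
  have hEa : ∀ i, (D - D').mulVec a i = P i - Q i := by
    intro i; rw [Matrix.sub_mulVec]; rfl
  have hEa' : ∀ i, (D - D').mulVec a' i = P' i - Q' i := by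
    intro i; rw [Matrix.sub_mulVec]; rfl
  have h1 := sconv hlam hmin1 a'
  have h2 := sconv hlam hmin2 a
  have hsym : ∑ i, (D.mulVec (a' - a) i)^2 = ∑ i, (D.mulVec u i)^2 := by
    refine Finset.sum_congr rfl fun i _ => ?_
    have h5 : D.mulVec (a' - a) i = -(D.mulVec u i) := by
      rw [hu, Matrix.mulVec_sub, Matrix.mulVec_sub]; simp
    rw [h5]; ring
  rw [hsym] at h1
  have hΔ : (1/4) * ∑ i, (D.mulVec u i)^2 ≤
      (1/2) * (∑ i, ((D - D').mulVec u) i * w i)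
      + (1/2) * (∑ i, (D'.mulVec u) i * (w i - w' i)) := by
    have e1 : (1/2) * (∑ i, (x i - P' i)^2) - (1/2) * (∑ i, (x i - P i)^2)
        + ((1/2) * (∑ i, (x' i - Q i)^2) - (1/2) * (∑ i, (x' i - Q' i)^2))
        = (1/2) * (∑ i, ((D - D').mulVec u) i * w i)
          + (1/2) * (∑ i, (D'.mulVec u) i * (w i - w' i)) := by
      rw [mul_sum, mul_sum, mul_sum, mul_sum, mul_sum, mul_sum,
        ← sum_sub_distrib, ← sum_sub_distrib, ← sum_add_distrib, ← sum_add_distrib]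
      refine Finset.sum_congr rfl fun i _ => ?_
      rw [hEu i, hDu i, hD'u i, hw, hw']
      ring
    have h1' := h1
    have h2' := h2
    simp only [f] at h1' h2'
    simp only [← hP, ← hP', ← hQ, ← hQ', ← hu] at h1' h2'
    nlinarith [h1', h2', e1,
      Finset.sum_nonneg (fun i (_ : i ∈ univ) => sq_nonneg (D'.mulVec u i))]
  have hnu : nr u ≤ 2 * B := by
    calc nr u ≤ nr a + nr a' := nr_sub_le a a'
    _ ≤ 2 * B := by linarith
  have hnP : nr P ≤ SK * B := by
    calc nr P ≤ nrF D * nr a := nr_mulVec_le D a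
    _ ≤ SK * B := mul_le_mul hD ha (nr_nonneg a) hSK0
  have hnP' : nr P' ≤ SK * B := by
    calc nr P' ≤ nrF D * nr a' := nr_mulVec_le D a'
    _ ≤ SK * B := mul_le_mul hD ha' (nr_nonneg a') hSK0
  have hnw : nr w ≤ 2 * R + 2 * SK * B := by
    have e : nr w = nr ((x + x) + (-P) + (-P')) := nr_congr _ _ fun i => by
      simp [hw, Pi.add_apply, Pi.neg_apply]; ring
    rw [e]
    calc nr ((x + x) + (-P) + (-P')) ≤ nr ((x + x) + (-P)) + nr (-P') := nr_add_le _ _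
    _ ≤ nr (x + x) + nr (-P) + nr (-P') := by linarith [nr_add_le (x + x) (-P)]
    _ ≤ (nr x + nr x) + nr P + nr P' := by rw [nr_neg, nr_neg]; linarith [nr_add_le x x]
    _ ≤ 2 * R + 2 * SK * B := by linarith
  have hnww' : nr (fun i => w i - w' i) ≤ 2 * nr (x - x') + 2 * B * nrF (D - D') := by
    have e : nr (fun i => w i - w' i)
        = nr ((x - x') + (x - x') + (-(D - D').mulVec a) + (-(D - D').mulVec a')) :=
      nr_congr _ _ fun i => by
        simp only [hw, hw', Pi.add_apply, Pi.neg_apply, Pi.sub_apply, hEa i, hEa' i]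
        ring
    rw [e]
    have t1 := nr_add_le ((x - x') + (x - x') + (-(D - D').mulVec a)) (-(D - D').mulVec a')
    have t2 := nr_add_le ((x - x') + (x - x')) (-(D - D').mulVec a)
    have t3 := nr_add_le (x - x') (x - x')
    rw [nr_neg] at t1 t2
    have b1 : nr ((D - D').mulVec a) ≤ nrF (D - D') * B := by
      calc nr ((D - D').mulVec a) ≤ nrF (D - D') * nr a := nr_mulVec_le _ _
      _ ≤ nrF (D - D') * B := mul_le_mul_of_nonneg_left ha (nrF_nonneg _)
    have b2 : nr ((D - D').mulVec a') ≤ nrF (D - D') * B := by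
      calc nr ((D - D').mulVec a') ≤ nrF (D - D') * nr a' := nr_mulVec_le _ _
      _ ≤ nrF (D - D') * B := mul_le_mul_of_nonneg_left ha' (nrF_nonneg _)
    nlinarith [t1, t2, t3, b1, b2]
  have bT1 : |∑ i, ((D - D').mulVec u) i * w i| ≤ (nrF (D - D') * nr u) * (2*R + 2*SK*B) := by
    calc |∑ i, ((D - D').mulVec u) i * w i| ≤ nr ((D - D').mulVec u) * nr w := cs _ _
    _ ≤ (nrF (D - D') * nr u) * (2*R + 2*SK*B) :=
        mul_le_mul (nr_mulVec_le _ _) hnw (nr_nonneg _)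
          (mul_nonneg (nrF_nonneg _) (nr_nonneg _))
  have bT2 : |∑ i, (D'.mulVec u) i * (w i - w' i)|
      ≤ (SK * nr u) * (2 * nr (x - x') + 2 * B * nrF (D - D')) := by
    calc |∑ i, (D'.mulVec u) i * (w i - w' i)|
        ≤ nr (D'.mulVec u) * nr (fun i => w i - w' i) := cs _ _
    _ ≤ (SK * nr u) * (2 * nr (x - x') + 2 * B * nrF (D - D')) := by
        refine mul_le_mul ?_ hnww' (nr_nonneg _) (mul_nonneg hSK0 (nr_nonneg _))
        calc nr (D'.mulVec u) ≤ nrF D' * nr u := nr_mulVec_le _ _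
        _ ≤ SK * nr u := mul_le_mul_of_nonneg_right hD' (nr_nonneg _)
  have hnx0 := nr_nonneg (x - x')
  have hnE0 := nrF_nonneg (D - D')
  have hnu0 := nr_nonneg u
  have a1 := abs_le.mp bT1
  have a2 := abs_le.mp bT2
  calc (1/4) * ∑ i, (D.mulVec u i)^2
      ≤ (1/2) * (∑ i, ((D - D').mulVec u) i * w i)
        + (1/2) * (∑ i, (D'.mulVec u) i * (w i - w' i)) := hΔ
  _ ≤ (1/2) * ((nrF (D - D') * nr u) * (2*R + 2*SK*B))
        + (1/2) * ((SK * nr u) * (2 * nr (x - x') + 2 * B * nrF (D - D'))) := by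
      linarith [a1.2, a2.2]
  _ ≤ (R + 2*SK*B + SK) * (nr (x - x') + nrF (D - D')) * nr u := by
      nlinarith [mul_nonneg (mul_nonneg hSK0 hB0) (mul_nonneg hnx0 hnu0),
        mul_nonneg hR0 (mul_nonneg hnx0 hnu0),
        mul_nonneg hSK0 (mul_nonneg hnE0 hnu0),
        mul_nonneg (mul_nonneg hSK0 hB0) (mul_nonneg hnE0 hnu0)]

open Filter Topology

lemma tendsto_mv {m k : ℕ} (Dn : ℕ → Matrix (Fin m) (Fin k) ℝ) (An : ℕ → Fin k → ℝ)
    (D : Matrix (Fin m) (Fin k) ℝ) (a : Fin k → ℝ)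
    (hD : ∀ i j, Tendsto (fun n => Dn n i j) atTop (𝓝 (D i j)))
    (hA : ∀ j, Tendsto (fun n => An n j) atTop (𝓝 (a j))) (i : Fin m) :
    Tendsto (fun n => (Dn n).mulVec (An n) i) atTop (𝓝 (D.mulVec a i)) := by
  simp only [Matrix.mulVec, dotProduct]
  exact tendsto_finset_sum _ fun j _ => (hD i j).mul (hA j)

lemma tendsto_f {m k : ℕ} (lam : ℝ) (X : ℕ → Fin m → ℝ)
    (Dn : ℕ → Matrix (Fin m) (Fin k) ℝ) (An : ℕ → Fin k → ℝ)
    (x : Fin m → ℝ) (D : Matrix (Fin m) (Fin k) ℝ) (a : Fin k → ℝ)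
    (hX : ∀ i, Tendsto (fun n => X n i) atTop (𝓝 (x i)))
    (hD : ∀ i j, Tendsto (fun n => Dn n i j) atTop (𝓝 (D i j)))
    (hA : ∀ j, Tendsto (fun n => An n j) atTop (𝓝 (a j))) :
    Tendsto (fun n => f lam (X n) (Dn n) (An n)) atTop (𝓝 (f lam x D a)) := by
  simp only [f]
  refine Tendsto.add (Tendsto.const_mul _ ?_) (Tendsto.const_mul _ ?_)
  · exact tendsto_finset_sum _ fun i _ =>
      (((hX i).sub (tendsto_mv Dn An D a hD hA i)).pow 2)
  · exact tendsto_finset_sum _ fun j _ => (hA j).abs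

lemma tendsto_corr {m k : ℕ} (X : ℕ → Fin m → ℝ)
    (Dn : ℕ → Matrix (Fin m) (Fin k) ℝ) (An : ℕ → Fin k → ℝ)
    (x : Fin m → ℝ) (D : Matrix (Fin m) (Fin k) ℝ) (a : Fin k → ℝ)
    (hX : ∀ i, Tendsto (fun n => X n i) atTop (𝓝 (x i)))
    (hD : ∀ i j, Tendsto (fun n => Dn n i j) atTop (𝓝 (D i j)))
    (hA : ∀ j, Tendsto (fun n => An n j) atTop (𝓝 (a j))) (j : Fin k) :
    Tendsto (fun n => corr (X n) (Dn n) (An n) j) atTop (𝓝 (corr x D a j)) := by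
  simp only [corr]
  exact tendsto_finset_sum _ fun i _ =>
    (hD i j).mul ((hX i).sub (tendsto_mv Dn An D a hD hA i))

end LassoAux

open Finset Filter Topology LassoAux

set_option maxHeartbeats 2000000 in
theorem lasso_solution_uniformly_lipschitz (m k : ℕ) (lam : ℝ) (hlam : 0 < lam)
    (K : Set (Fin m → ℝ)) (hK : IsCompact K)
    (C : Set (Matrix (Fin m) (Fin k) ℝ))
    (hC : C = {D | ∀ j : Fin k, ∑ i, (D i j)^2 ≤ 1})
    (αstar : (Fin m → ℝ) → Matrix (Fin m) (Fin k) ℝ → (Fin k → ℝ))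
    (hαstar : ∀ x ∈ K, ∀ D ∈ C, ∀ β : Fin k → ℝ, β ≠ αstar x D →
        (1/2) * (∑ i, (x i - D.mulVec (αstar x D) i)^2) + lam * ∑ j, |αstar x D j| <
        (1/2) * (∑ i, (x i - D.mulVec β i)^2) + lam * ∑ j, |β j|)
    (κ₂ : ℝ) (hκ₂ : 0 < κ₂)
    (heig : ∀ x ∈ K, ∀ D ∈ C, ∀ v : Fin k → ℝ,
        (∀ j : Fin k, |∑ i, D i j * (x i - D.mulVec (αstar x D) i)| ≠ lam → v j = 0) →
        ∑ i, (D.mulVec v i)^2 ≥ κ₂ * ∑ j, (v j)^2) :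
    ∃ L : ℝ, 0 < L ∧ ∀ x ∈ K, ∀ x' ∈ K, ∀ D ∈ C, ∀ D' ∈ C,
      Real.sqrt (∑ j, (αstar x D j - αstar x' D' j)^2) ≤
        L * (Real.sqrt (∑ i, (x i - x' i)^2) +
             Real.sqrt (∑ i, ∑ j, (D i j - D' i j)^2)) := by
  classical
  -- minimality in terms of f
  have hmin : ∀ x ∈ K, ∀ D ∈ C, ∀ β, f lam x D (αstar x D) ≤ f lam x D β := by
    intro x hx D hD β
    by_cases hβ : β = αstar x D
    · rw [hβ]
    · exact le_of_lt (hαstar x hx D hD β hβ)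
  -- bound R on K
  have hnrcont : Continuous fun v : Fin m → ℝ => nr v := by
    have : Continuous fun v : Fin m → ℝ => Real.sqrt (∑ i, v i ^ 2) :=
      Real.continuous_sqrt.comp (continuous_finset_sum _ fun i _ => (continuous_apply i).pow 2)
    exact this
  obtain ⟨R0, hR0⟩ := hK.exists_bound_of_continuousOn hnrcont.continuousOn
  set R : ℝ := max R0 0 with hRdef
  have hR : ∀ x ∈ K, nr x ≤ R := by
    intro x hx
    calc nr x ≤ |nr x| := le_abs_self _
    _ ≤ R0 := hR0 x hx
    _ ≤ R := le_max_left _ _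
  have hR0' : (0:ℝ) ≤ R := le_max_right _ _
  -- bound B on solutions
  set B : ℝ := R^2 / (2*lam) with hBdef
  have hB0 : (0:ℝ) ≤ B := by positivity
  have hBabs : ∀ x ∈ K, ∀ D ∈ C, ∑ j, |αstar x D j| ≤ B := by
    intro x hx D hD
    have h1 := hmin x hx D hD 0
    have h2 : f lam x D 0 = (1/2) * ∑ i, (x i)^2 := by
      simp [f, Matrix.mulVec_zero]
    have h3 : ∑ i, (x i)^2 ≤ R^2 := by
      rw [← sq_nr x]
      exact pow_le_pow_left₀ (nr_nonneg x) (hR x hx) 2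
    have h4 : lam * ∑ j, |αstar x D j| ≤ f lam x D (αstar x D) := by
      simp only [f]
      have : (0:ℝ) ≤ (1/2) * ∑ i, (x i - D.mulVec (αstar x D) i)^2 := by positivity
      linarith
    rw [le_div_iff₀ (by positivity : (0:ℝ) < 2*lam)]
    rw [h2] at h1
    nlinarith [h1, h4]
  have hBnr : ∀ x ∈ K, ∀ D ∈ C, nr (αstar x D) ≤ B := fun x hx D hD =>
    (nr_le_sum_abs _).trans (hBabs x hx D hD)
  have hBj : ∀ x ∈ K, ∀ D ∈ C, ∀ j, |αstar x D j| ≤ B := by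
    intro x hx D hD j
    refine le_trans ?_ (hBabs x hx D hD)
    exact Finset.single_le_sum (f := fun j => |αstar x D j|) (fun _ _ => abs_nonneg _)
      (mem_univ j)
  -- bound SK on dictionaries
  set SK : ℝ := Real.sqrt k with hSKdef
  have hSK0 : (0:ℝ) ≤ SK := Real.sqrt_nonneg _
  have hSK : ∀ D ∈ C, nrF D ≤ SK := by
    intro D hD
    rw [hC] at hD
    rw [nrF, hSKdef]
    refine Real.sqrt_le_sqrt ?_
    rw [Finset.sum_comm]
    calc ∑ j, ∑ i, (D i j)^2 ≤ ∑ j : Fin k, (1:ℝ) := Finset.sum_le_sum fun j _ => hD j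
    _ = k := by simp
  set M : ℝ := R + 2*SK*B + SK with hMdef
  have hM0 : (0:ℝ) ≤ M := by positivity
  -- contradiction setup
  by_contra hcon
  push_neg at hcon
  have hbad : ∀ n : ℕ, ∃ x, x ∈ K ∧ ∃ x', x' ∈ K ∧ ∃ D, D ∈ C ∧ ∃ D', D' ∈ C ∧
      ((n:ℝ)+1) * (Real.sqrt (∑ i, (x i - x' i)^2) +
        Real.sqrt (∑ i, ∑ j, (D i j - D' i j)^2)) <
      Real.sqrt (∑ j, (αstar x D j - αstar x' D' j)^2) := by
    intro n
    obtain ⟨x, hx, x', hx', D, hD, D', hD', h⟩ := hcon ((n:ℝ)+1) (by positivity)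
    exact ⟨x, hx, x', hx', D, hD, D', hD', h⟩
  choose X hXK X' hX'K Dn hDC Dn' hD'C hlt using hbad
  set an : ℕ → Fin k → ℝ := fun n => αstar (X n) (Dn n) with han
  set an' : ℕ → Fin k → ℝ := fun n => αstar (X' n) (Dn' n) with han'
  -- rephrase badness with nr / nrF
  have hlt' : ∀ n : ℕ, ((n:ℝ)+1) * (nr (X n - X' n) + nrF (Dn n - Dn' n)) <
      nr (an n - an' n) := by
    intro n
    have e1 : nr (X n - X' n) = Real.sqrt (∑ i, (X n i - X' n i)^2) := by
      rw [nr]; congr 1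
    have e2 : nrF (Dn n - Dn' n) = Real.sqrt (∑ i, ∑ j, (Dn n i j - Dn' n i j)^2) := by
      rw [nrF]; congr 1
    have e3 : nr (an n - an' n) = Real.sqrt (∑ j, (an n j - an' n j)^2) := by
      rw [nr]; congr 1
    rw [e1, e2, e3]
    exact hlt n
  -- compactness of C
  have hCclosed : IsClosed C := by
    rw [hC, show {D : Matrix (Fin m) (Fin k) ℝ | ∀ j : Fin k, ∑ i, (D i j)^2 ≤ 1}
        = ⋂ j : Fin k, {D : Matrix (Fin m) (Fin k) ℝ | ∑ i, (D i j)^2 ≤ 1} from by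
      ext D; simp]
    exact isClosed_iInter fun j => isClosed_le
      (continuous_finset_sum _ fun i _ => (continuous_id.matrix_elem i j).pow 2)
      continuous_const
  have hrow : IsCompact {r : Fin k → ℝ | ∀ j, r j ∈ Set.Icc (-1:ℝ) 1} := by
    rw [show {r : Fin k → ℝ | ∀ j, r j ∈ Set.Icc (-1:ℝ) 1}
        = Set.pi Set.univ (fun _ : Fin k => Set.Icc (-1:ℝ) 1) from by
      ext r
      simp only [Set.mem_setOf_eq, Set.mem_pi, Set.mem_univ, true_implies]]
    exact isCompact_univ_pi fun _ => isCompact_Icc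
  have hS : IsCompact {D : Matrix (Fin m) (Fin k) ℝ | ∀ i j, D i j ∈ Set.Icc (-1:ℝ) 1} := by
    rw [show {D : Matrix (Fin m) (Fin k) ℝ | ∀ i j, D i j ∈ Set.Icc (-1:ℝ) 1}
        = (Set.pi Set.univ (fun _ : Fin m => {r : Fin k → ℝ | ∀ j, r j ∈ Set.Icc (-1:ℝ) 1})
          : Set (Fin m → Fin k → ℝ)) from by
      ext D
      constructor
      · intro h
        exact fun i _ => h i
      · intro h i j
        exact h i (Set.mem_univ i) j]
    exact isCompact_univ_pi fun _ => hrow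
  have hCc : IsCompact C := by
    refine hS.of_isClosed_subset hCclosed ?_
    intro D hD
    rw [hC] at hD
    intro i j
    have h1 : (D i j)^2 ≤ 1 := by
      refine le_trans ?_ (hD j)
      exact Finset.single_le_sum (f := fun i' => (D i' j)^2) (fun _ _ => sq_nonneg _)
        (mem_univ i)
    constructor
    · nlinarith
    · nlinarith
  -- compactness of the ball
  have hBallc : IsCompact {a : Fin k → ℝ | ∀ j, a j ∈ Set.Icc (-B) B} := by
    rw [show {a : Fin k → ℝ | ∀ j, a j ∈ Set.Icc (-B) B}
        = Set.pi Set.univ (fun _ : Fin k => Set.Icc (-B) B) from by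
      ext a
      simp only [Set.mem_setOf_eq, Set.mem_pi, Set.mem_univ, true_implies]]
    exact isCompact_univ_pi fun _ => isCompact_Icc
  -- run the subsequence extraction
  haveI : FirstCountableTopology (Matrix (Fin m) (Fin k) ℝ) :=
    inferInstanceAs (FirstCountableTopology (Fin m → Fin k → ℝ))
  have hz : ∀ n : ℕ, ((X n, (Dn n, (an n, an' n))) :
      (Fin m → ℝ) × (Matrix (Fin m) (Fin k) ℝ) × ((Fin k → ℝ) × (Fin k → ℝ)))
      ∈ K ×ˢ (C ×ˢ ({a : Fin k → ℝ | ∀ j, a j ∈ Set.Icc (-B) B}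
          ×ˢ {a : Fin k → ℝ | ∀ j, a j ∈ Set.Icc (-B) B})) := by
    intro n
    refine ⟨hXK n, hDC n, ?_, ?_⟩
    · intro j
      have := hBj (X n) (hXK n) (Dn n) (hDC n) j
      rw [abs_le] at this
      exact ⟨by linarith [this.1], this.2⟩
    · intro j
      have := hBj (X' n) (hX'K n) (Dn' n) (hD'C n) j
      rw [abs_le] at this
      exact ⟨by linarith [this.1], this.2⟩
  obtain ⟨⟨x₀, D₀, a₀, a₀'⟩, hmem, φ, hφ, hconv⟩ :=
    (hK.prod (hCc.prod (hBallc.prod hBallc))).tendsto_subseq hz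
  have hx₀K : x₀ ∈ K := hmem.1
  have hD₀C : D₀ ∈ C := hmem.2.1
  -- component convergence
  have hx0 : Tendsto (fun n => X (φ n)) atTop (𝓝 x₀) :=
    (continuous_fst.tendsto _).comp hconv
  have hrest : Tendsto (fun n => (Dn (φ n), (an (φ n), an' (φ n)))) atTop
      (𝓝 (D₀, (a₀, a₀'))) := (continuous_snd.tendsto _).comp hconv
  have hD0 : Tendsto (fun n => Dn (φ n)) atTop (𝓝 D₀) :=
    (continuous_fst.tendsto _).comp hrest
  have hrest2 : Tendsto (fun n => (an (φ n), an' (φ n))) atTop (𝓝 (a₀, a₀')) :=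
    (continuous_snd.tendsto _).comp hrest
  have ha0 : Tendsto (fun n => an (φ n)) atTop (𝓝 a₀) :=
    (continuous_fst.tendsto _).comp hrest2
  have ha0' : Tendsto (fun n => an' (φ n)) atTop (𝓝 a₀') :=
    (continuous_snd.tendsto _).comp hrest2
  have hx0i : ∀ i, Tendsto (fun n => X (φ n) i) atTop (𝓝 (x₀ i)) :=
    fun i => tendsto_pi_nhds.mp hx0 i
  have hD0ij : ∀ i j, Tendsto (fun n => Dn (φ n) i j) atTop (𝓝 (D₀ i j)) :=
    fun i j => ((continuous_id.matrix_elem i j).tendsto D₀).comp hD0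
  have ha0j : ∀ j, Tendsto (fun n => an (φ n) j) atTop (𝓝 (a₀ j)) :=
    fun j => tendsto_pi_nhds.mp ha0 j
  have ha0'j : ∀ j, Tendsto (fun n => an' (φ n) j) atTop (𝓝 (a₀' j)) :=
    fun j => tendsto_pi_nhds.mp ha0' j
  -- the gap tends to zero
  set dn : ℕ → ℝ := fun n => nr (X n - X' n) + nrF (Dn n - Dn' n) with hdn
  have hdn_nonneg : ∀ n, 0 ≤ dn n := fun n =>
    add_nonneg (nr_nonneg _) (nrF_nonneg _)
  have hdn_le : ∀ n : ℕ, dn n ≤ 2*B / ((n:ℝ)+1) := by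
    intro n
    have h1 := hlt' n
    have h2 : nr (an n - an' n) ≤ 2*B := by
      calc nr (an n - an' n) ≤ nr (an n) + nr (an' n) := nr_sub_le _ _
      _ ≤ 2*B := by
          have hb1 := hBnr (X n) (hXK n) (Dn n) (hDC n)
          have hb2 := hBnr (X' n) (hX'K n) (Dn' n) (hD'C n)
          simp only [han, han']
          linarith [hb1, hb2]
    rw [le_div_iff₀ (by positivity : (0:ℝ) < (n:ℝ)+1)]
    simp only [hdn]
    nlinarith [h1, h2]
  have hg0 : Tendsto (fun n : ℕ => 2*B / ((n:ℝ)+1)) atTop (𝓝 0) := by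
    have h := (tendsto_const_div_atTop_nhds_zero_nat (2*B)).comp (tendsto_add_atTop_nat 1)
    have he : (fun n : ℕ => 2*B / ((n:ℝ)+1)) = (fun n : ℕ => 2*B / (n:ℝ)) ∘ (fun n => n + 1) := by
      funext n
      show 2*B / ((n:ℝ)+1) = 2*B / (((n+1 : ℕ)):ℝ)
      congr 1
      push_cast
      ring
    rw [he]; exact h
  have hdnφ0 : Tendsto (fun n => dn (φ n)) atTop (𝓝 0) := by
    refine squeeze_zero (fun n => hdn_nonneg (φ n)) (fun n => ?_) hg0
    calc dn (φ n) ≤ 2*B / ((φ n : ℝ)+1) := hdn_le (φ n)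
    _ ≤ 2*B / ((n:ℝ)+1) := by
        refine div_le_div_of_nonneg_left (by positivity) (by positivity) ?_
        have h9 : n ≤ φ n := hφ.le_apply
        have h10 : ((n:ℝ)) ≤ ((φ n : ℝ)) := by exact_mod_cast h9
        linarith
  -- primed coordinate convergence
  have hx'0i : ∀ i, Tendsto (fun n => X' (φ n) i) atTop (𝓝 (x₀ i)) := by
    intro i
    have hdiff : Tendsto (fun n => X (φ n) i - X' (φ n) i) atTop (𝓝 0) := by
      refine squeeze_zero_norm (fun n => ?_) hdnφ0
      calc ‖X (φ n) i - X' (φ n) i‖ = |(X (φ n) - X' (φ n)) i| := by simp [Pi.sub_apply]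
      _ ≤ nr (X (φ n) - X' (φ n)) := abs_le_nr _ i
      _ ≤ dn (φ n) := le_add_of_nonneg_right (nrF_nonneg _)
    have := (hx0i i).sub hdiff
    simpa using this
  have hD'0ij : ∀ i j, Tendsto (fun n => Dn' (φ n) i j) atTop (𝓝 (D₀ i j)) := by
    intro i j
    have hdiff : Tendsto (fun n => Dn (φ n) i j - Dn' (φ n) i j) atTop (𝓝 0) := by
      refine squeeze_zero_norm (fun n => ?_) hdnφ0
      calc ‖Dn (φ n) i j - Dn' (φ n) i j‖ = |(Dn (φ n) - Dn' (φ n)) i j| := by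
            simp [Matrix.sub_apply]
      _ ≤ nrF (Dn (φ n) - Dn' (φ n)) := abs_le_nrF _ i j
      _ ≤ dn (φ n) := le_add_of_nonneg_left (nr_nonneg _)
    have := (hD0ij i j).sub hdiff
    simpa using this
  -- identify the limits
  have hfa : ∀ β, f lam x₀ D₀ a₀ ≤ f lam x₀ D₀ β := by
    intro β
    exact le_of_tendsto_of_tendsto'
      (tendsto_f lam _ _ _ x₀ D₀ a₀ hx0i hD0ij ha0j)
      (tendsto_f lam (fun n => X (φ n)) (fun n => Dn (φ n)) (fun _ => β) x₀ D₀ β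
        hx0i hD0ij (fun j => tendsto_const_nhds))
      (fun n => hmin (X (φ n)) (hXK _) (Dn (φ n)) (hDC _) β)
  have hfa' : ∀ β, f lam x₀ D₀ a₀' ≤ f lam x₀ D₀ β := by
    intro β
    exact le_of_tendsto_of_tendsto'
      (tendsto_f lam _ _ _ x₀ D₀ a₀' hx'0i hD'0ij ha0'j)
      (tendsto_f lam (fun n => X' (φ n)) (fun n => Dn' (φ n)) (fun _ => β) x₀ D₀ β
        hx'0i hD'0ij (fun j => tendsto_const_nhds))
      (fun n => hmin (X' (φ n)) (hX'K _) (Dn' (φ n)) (hD'C _) β)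
  have ha₀eq : a₀ = αstar x₀ D₀ := by
    by_contra hne
    exact absurd (hfa (αstar x₀ D₀)) (not_le.mpr (hαstar x₀ hx₀K D₀ hD₀C a₀ hne))
  have ha₀'eq : a₀' = αstar x₀ D₀ := by
    by_contra hne
    exact absurd (hfa' (αstar x₀ D₀)) (not_le.mpr (hαstar x₀ hx₀K D₀ hD₀C a₀' hne))
  have hminlim : ∀ β, f lam x₀ D₀ (αstar x₀ D₀) ≤ f lam x₀ D₀ β := hmin x₀ hx₀K D₀ hD₀C
  -- eventual support condition
  have hev1 : ∀ᶠ n in atTop, ∀ j : Fin k,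
      (|corr x₀ D₀ (αstar x₀ D₀) j| ≠ lam → an (φ n) j = 0 ∧ an' (φ n) j = 0) := by
    rw [Filter.eventually_all]
    intro j
    by_cases hj : |corr x₀ D₀ (αstar x₀ D₀) j| = lam
    · exact Eventually.of_forall fun n h => absurd hj h
    · have hlt2 : |corr x₀ D₀ (αstar x₀ D₀) j| < lam :=
        lt_of_le_of_ne (foc_le hlam hminlim j) hj
      have hc1 : Tendsto (fun n => corr (X (φ n)) (Dn (φ n)) (an (φ n)) j) atTop
          (𝓝 (corr x₀ D₀ (αstar x₀ D₀) j)) := by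
        have h := tendsto_corr _ _ _ x₀ D₀ a₀ hx0i hD0ij ha0j j
        rw [ha₀eq] at h
        exact h
      have hc2 : Tendsto (fun n => corr (X' (φ n)) (Dn' (φ n)) (an' (φ n)) j) atTop
          (𝓝 (corr x₀ D₀ (αstar x₀ D₀) j)) := by
        have h := tendsto_corr _ _ _ x₀ D₀ a₀' hx'0i hD'0ij ha0'j j
        rw [ha₀'eq] at h
        exact h
      have he1 := hc1.abs.eventually_lt_const hlt2
      have he2 := hc2.abs.eventually_lt_const hlt2
      filter_upwards [he1, he2] with n h1 h2 _
      constructor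
      · by_contra hne
        exact absurd (foc_eq hlam (hmin (X (φ n)) (hXK _) (Dn (φ n)) (hDC _)) j hne)
          (ne_of_lt h1)
      · by_contra hne
        exact absurd (foc_eq hlam (hmin (X' (φ n)) (hX'K _) (Dn' (φ n)) (hD'C _)) j hne)
          (ne_of_lt h2)
  -- eventual closeness of dictionaries
  have hev2 : ∀ᶠ n in atTop, nrF (Dn (φ n) - D₀) ≤ Real.sqrt κ₂ / 2 := by
    have hnrF0 : Tendsto (fun n => nrF (Dn (φ n) - D₀)) atTop (𝓝 0) := by
      have hsum : Tendsto (fun n => ∑ i, ∑ j, ((Dn (φ n) - D₀) i j)^2) atTop (𝓝 0) := by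
        have : Tendsto (fun n => ∑ i, ∑ j, ((Dn (φ n) - D₀) i j)^2) atTop
            (𝓝 (∑ i : Fin m, ∑ j : Fin k, (0:ℝ))) := by
          refine tendsto_finset_sum _ fun i _ => tendsto_finset_sum _ fun j _ => ?_
          have h := (hD0ij i j).sub (tendsto_const_nhds (x := D₀ i j))
          simp only [sub_self] at h
          have h2 : Tendsto (fun n => ((Dn (φ n) - D₀) i j)) atTop (𝓝 0) := by
            simpa [Matrix.sub_apply] using h
          simpa using h2.pow 2
        simpa using this
      have := hsum.sqrt
      simpa [nrF, Real.sqrt_zero] using this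
    exact (hnrF0.eventually_lt_const (div_pos (Real.sqrt_pos.mpr hκ₂) two_pos)).mono
      fun n h => h.le
  -- pick a large index
  obtain ⟨n, hn12, hn3⟩ :=
    ((hev1.and hev2).and (eventually_ge_atTop (Nat.ceil (16*M/κ₂)))).exists
  obtain ⟨hn1, hn2⟩ := hn12
  -- notation at index n
  set u : Fin k → ℝ := an (φ n) - an' (φ n) with hu
  have hsupp : ∀ j : Fin k, |∑ i, D₀ i j * (x₀ i - D₀.mulVec (αstar x₀ D₀) i)| ≠ lam →
      u j = 0 := by
    intro j hj
    have h := hn1 j hj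
    simp [hu, Pi.sub_apply, h.1, h.2]
  have heg := heig x₀ hx₀K D₀ hD₀C u hsupp
  -- lower bound on ‖D_n u‖
  have hDlow : Real.sqrt κ₂ * nr u ≤ nr (D₀.mulVec u) := by
    rw [nr, nr, ← Real.sqrt_mul hκ₂.le]
    exact Real.sqrt_le_sqrt heg
  have htri : nr (D₀.mulVec u) ≤ nr ((Dn (φ n)).mulVec u) + nrF (Dn (φ n) - D₀) * nr u := by
    have e : ∀ i, D₀.mulVec u i = ((Dn (φ n)).mulVec u + (D₀ - Dn (φ n)).mulVec u) i := by
      intro i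
      simp [Matrix.sub_mulVec, Pi.add_apply, Pi.sub_apply]
    rw [nr_congr _ _ e]
    calc nr ((Dn (φ n)).mulVec u + (D₀ - Dn (φ n)).mulVec u)
        ≤ nr ((Dn (φ n)).mulVec u) + nr ((D₀ - Dn (φ n)).mulVec u) := nr_add_le _ _
    _ ≤ nr ((Dn (φ n)).mulVec u) + nrF (D₀ - Dn (φ n)) * nr u := by
        linarith [nr_mulVec_le (D₀ - Dn (φ n)) u]
    _ = nr ((Dn (φ n)).mulVec u) + nrF (Dn (φ n) - D₀) * nr u := by
        rw [nrF_sub_comm]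
  have h1 : Real.sqrt κ₂ / 2 * nr u ≤ nr ((Dn (φ n)).mulVec u) := by
    have h2 : nrF (Dn (φ n) - D₀) * nr u ≤ Real.sqrt κ₂ / 2 * nr u :=
      mul_le_mul_of_nonneg_right hn2 (nr_nonneg u)
    linarith [hDlow, htri]
  have hlow2 : κ₂/16 * (nr u)^2 ≤ (1/4) * ∑ i, ((Dn (φ n)).mulVec u i)^2 := by
    have h2 : (Real.sqrt κ₂ / 2 * nr u)^2 ≤ (nr ((Dn (φ n)).mulVec u))^2 :=
      pow_le_pow_left₀ (mul_nonneg (by positivity) (nr_nonneg u)) h1 2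
    rw [sq_nr] at h2
    have h3 : (Real.sqrt κ₂ / 2 * nr u)^2 = κ₂/4 * (nr u)^2 := by
      rw [mul_pow, div_pow, Real.sq_sqrt hκ₂.le]; ring
    rw [h3] at h2
    linarith
  -- quantitative bound
  have hq := quant hlam (R := R) (B := B) (SK := SK)
    (hmin (X (φ n)) (hXK _) (Dn (φ n)) (hDC _))
    (hmin (X' (φ n)) (hX'K _) (Dn' (φ n)) (hD'C _))
    hR0' hB0 hSK0
    (hR _ (hXK _)) (hR _ (hX'K _))
    (hBnr _ (hXK _) _ (hDC _)) (hBnr _ (hX'K _) _ (hD'C _))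
    (hSK _ (hDC _)) (hSK _ (hD'C _))
  -- badness at φ n
  have hbadn := hlt' (φ n)
  -- final contradiction
  set nu : ℝ := nr u with hnu
  set dd : ℝ := nr (X (φ n) - X' (φ n)) + nrF (Dn (φ n) - Dn' (φ n)) with hdd
  have hdd0 : 0 ≤ dd := add_nonneg (nr_nonneg _) (nrF_nonneg _)
  have hp0 : (0:ℝ) ≤ (φ n : ℝ) := Nat.cast_nonneg _
  have hq' : κ₂/16 * nu^2 ≤ M * dd * nu := by
    calc κ₂/16 * nu^2 ≤ (1/4) * ∑ i, ((Dn (φ n)).mulVec u i)^2 := hlow2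
    _ ≤ M * dd * nu := hq
  have hbad' : ((φ n : ℝ)+1) * dd < nu := hbadn
  have hnu_pos : 0 < nu := lt_of_le_of_lt (mul_nonneg (by positivity) hdd0) hbad'
  have hA'' : κ₂ * nu ≤ 16 * M * dd := by
    have hsq : κ₂ * nu * nu ≤ 16 * M * dd * nu := by
      clear_value nu dd M
      nlinarith [hq']
    exact le_of_mul_le_mul_right hsq hnu_pos
  have hpk : 16 * M ≤ κ₂ * (φ n : ℝ) := by
    have h4 : (16*M/κ₂ : ℝ) ≤ (Nat.ceil (16*M/κ₂) : ℝ) := Nat.le_ceil _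
    have h5 : ((Nat.ceil (16*M/κ₂) : ℕ) : ℝ) ≤ (n : ℝ) := by exact_mod_cast hn3
    have h6 : (n : ℝ) ≤ (φ n : ℝ) := by exact_mod_cast hφ.le_apply
    have h7 : 16*M/κ₂ ≤ (φ n : ℝ) := by linarith
    rw [div_le_iff₀ hκ₂] at h7
    linarith [h7]
  nlinarith [mul_le_mul_of_nonneg_right hA'' (by linarith : (0:ℝ) ≤ (φ n : ℝ) + 1),
    mul_le_mul_of_nonneg_left hbad'.le (by positivity : (0:ℝ) ≤ 16*M),
    mul_le_mul_of_nonneg_right hpk hnu_pos.le,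
    mul_pos hκ₂ hnu_pos]
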